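/- Let r and d be natural numbers with r ≥ 1 and d ≥ 1, let S be the free solvable group of rank r and derived length d, let h ∈ S be a nontrivial element, and let H = Subgroup.zpowers h be the cyclic subgroup generated by h. Then H is verbally closed in S if and only if H is a retract of S. -/

import Mathlib

instance derivedSeriesNormal (G : Type*) [Group G] (n : ℕ) :
    (derivedSeries G n).Normal :=
  derivedSeries_normal G n

open Multiplicative
open scoped commutatorElement

namespace VCAux

variable {α : Type*}

/-- The exponent-sum (abelianization) map of a free group, valued in finsupps. -/
noncomputable def expMap (α : Type*) : FreeGroup α →* Multiplicative (α →₀ ℤ) :=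
  FreeGroup.lift fun a => ofAdd (Finsupp.single a 1)

@[simp] lemma expMap_of (a : α) :
    expMap α (FreeGroup.of a) = ofAdd (Finsupp.single a 1) :=
  FreeGroup.lift_apply_of

lemma mem_commutator_of_expMap_eq_one {x : FreeGroup α} (hx : expMap α x = 1) :
    x ∈ commutator (FreeGroup α) := by
  have key : expMap α =
      (AddMonoidHom.toMultiplicativeRight
        (FreeAbelianGroup.toFinsupp (X := α))).comp Abelianization.of := by
    apply FreeGroup.ext_hom
    intro a
    simp only [expMap_of, MonoidHom.comp_apply]
    have h1 : FreeAbelianGroup.toFinsupp (FreeAbelianGroup.of a) = Finsupp.single a (1 : ℤ) :=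
      FreeAbelianGroup.toFinsupp_of a
    exact congrArg ofAdd h1.symm
  rw [key] at hx
  have h2 : FreeAbelianGroup.toFinsupp
      (Additive.ofMul (Abelianization.of x) : FreeAbelianGroup α) = 0 :=
    congrArg toAdd hx
  have h3 : (Additive.ofMul (Abelianization.of x) : FreeAbelianGroup α) = 0 := by
    have h4 := congrArg Finsupp.toFreeAbelianGroup h2
    exact (Finsupp.toFreeAbelianGroup_toFinsupp _).symm.trans (h4.trans (map_zero _))
  have h5 : Abelianization.of x = 1 := h3
  exact (QuotientGroup.eq_one_iff x).mp h5

lemma mem_commutator_of_zpow_mem {x : FreeGroup α} {n : ℤ} (hn : n ≠ 0)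
    (hx : x ^ n ∈ commutator (FreeGroup α)) : x ∈ commutator (FreeGroup α) := by
  apply mem_commutator_of_expMap_eq_one
  have h1 : expMap α (x ^ n) = 1 := Abelianization.commutator_subset_ker (expMap α) hx
  rw [map_zpow] at h1
  have h2 : n • (expMap α x).toAdd = 0 := by
    rw [← toAdd_zpow, h1]; rfl
  have h3 : (expMap α x).toAdd = 0 := by
    ext a
    have h4 := congrArg (fun f => f a) h2
    simp only [Finsupp.smul_apply, smul_eq_mul, Finsupp.coe_zero, Pi.zero_apply,
      mul_eq_zero] at h4
    exact h4.resolve_left hn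
  rw [← ofAdd_toAdd (expMap α x), h3]; rfl

lemma isFreeGroup_mem_commutator_of_zpow_mem {G : Type*} [Group G] [IsFreeGroup G]
    {x : G} {n : ℤ} (hn : n ≠ 0) (hx : x ^ n ∈ commutator G) : x ∈ commutator G := by
  set e := IsFreeGroup.toFreeGroup G with he
  have hmap : (commutator G).map e.toMonoidHom
      = commutator (FreeGroup (IsFreeGroup.Generators G)) := by
    rw [commutator_def, commutator_def, Subgroup.map_commutator,
      Subgroup.map_top_of_surjective _ e.surjective]
  have h1 : e x ^ n ∈ commutator (FreeGroup (IsFreeGroup.Generators G)) := by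
    rw [← hmap, ← map_zpow]
    exact Subgroup.mem_map_of_mem _ hx
  have h2 := mem_commutator_of_zpow_mem hn h1
  rw [← hmap] at h2
  exact (Subgroup.mem_map_iff_mem e.injective).mp h2

lemma derived_torsion (d : ℕ) (x : FreeGroup α) {n : ℤ} (hn : n ≠ 0)
    (hx : x ^ n ∈ derivedSeries (FreeGroup α) d) : x ∈ derivedSeries (FreeGroup α) d := by
  induction d with
  | zero => exact Subgroup.mem_top x
  | succ d ih =>
    set K := derivedSeries (FreeGroup α) d with hK
    have hKK : derivedSeries (FreeGroup α) (d + 1) = ⁅K, K⁆ := derivedSeries_succ _ d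
    rw [hKK] at hx
    have hsub : (⁅K, K⁆ : Subgroup (FreeGroup α)) ≤ K := by
      rw [Subgroup.commutator_le]
      intro p hp q hq
      exact mul_mem (mul_mem (mul_mem hp hq) (inv_mem hp)) (inv_mem hq)
    have hxK : x ∈ K := ih (hsub hx)
    have hmapK : Subgroup.map K.subtype (commutator K) = ⁅K, K⁆ := by
      rw [commutator_def, Subgroup.map_commutator, ← MonoidHom.range_eq_map,
        Subgroup.range_subtype]
    have hx' : (⟨x, hxK⟩ : K) ^ n ∈ commutator K := by
      rw [← hmapK] at hx
      obtain ⟨y, hy, hyx⟩ := hx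
      have hy2 : y = (⟨x, hxK⟩ : K) ^ n := Subtype.ext (by simpa using hyx)
      rwa [← hy2]
    have h2 := isFreeGroup_mem_commutator_of_zpow_mem hn hx'
    rw [hKK, ← hmapK]
    exact ⟨_, h2, rfl⟩

lemma quot_torsionfree (d : ℕ) (h : FreeGroup α ⧸ derivedSeries (FreeGroup α) d)
    {n : ℤ} (hn : n ≠ 0) (hh : h ^ n = 1) : h = 1 := by
  obtain ⟨x, rfl⟩ := QuotientGroup.mk_surjective h
  rw [← QuotientGroup.mk_zpow, QuotientGroup.eq_one_iff] at hh
  rw [QuotientGroup.eq_one_iff]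
  exact derived_torsion d x hn hh

lemma ofAdd_list_sum {A : Type*} [AddMonoid A] (l : List A) :
    (l.map (ofAdd : A → Multiplicative A)).prod = ofAdd l.sum := by
  induction l with
  | nil => rfl
  | cons a t ih => rw [List.map_cons, List.prod_cons, ih, List.sum_cons]; rfl

lemma lift_freeGroupCongr {β : Type*} {G : Type*} [Group G] (e : α ≃ β) (g : β → G)
    (x : FreeGroup α) :
    FreeGroup.lift g (FreeGroup.freeGroupCongr e x) = FreeGroup.lift (fun a => g (e a)) x := by
  have hcomp : (FreeGroup.lift g).comp (FreeGroup.freeGroupCongr e :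
      FreeGroup α →* FreeGroup β) = FreeGroup.lift (fun a => g (e a)) := by
    apply FreeGroup.ext_hom
    intro a
    show FreeGroup.lift g (FreeGroup.freeGroupCongr e (FreeGroup.of a)) = _
    rw [FreeGroup.freeGroupCongr_apply, FreeGroup.map.of, FreeGroup.lift_apply_of, FreeGroup.lift_apply_of]
  exact DFunLike.congr_fun hcomp x

lemma exists_commutator_list {G : Type*} [Group G] {x : G} (hx : x ∈ commutator G) :
    ∃ L : List (G × G), x = (L.map fun p => ⁅p.1, p.2⁆).prod := by
  rw [commutator_eq_closure] at hx
  induction hx using Subgroup.closure_induction with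
  | mem z hz =>
    obtain ⟨a, b, rfl⟩ := hz
    exact ⟨[(a, b)], by simp⟩
  | one => exact ⟨[], by simp⟩
  | mul y z _ _ hy hz =>
    obtain ⟨Ly, hLy⟩ := hy
    obtain ⟨Lz, hLz⟩ := hz
    exact ⟨Ly ++ Lz, by simp [hLy, hLz]⟩
  | inv y _ hy =>
    obtain ⟨Ly, hLy⟩ := hy
    refine ⟨Ly.reverse.map (fun p => (p.2, p.1)), ?_⟩
    rw [hLy, List.prod_inv_reverse]
    simp [List.map_map, Function.comp_def, commutatorElement_inv]

/-- Evaluating the word used in the main argument. -/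
lemma lift_word {G : Type*} [Group G] {r m : ℕ} (c : Fin r → ℤ)
    (gx : Fin r → G) (gy gz : Fin m → G) :
    FreeGroup.lift (Sum.elim gx (Sum.elim gy gz))
      (((List.finRange r).map fun i =>
          FreeGroup.of (Sum.inl i : Fin r ⊕ (Fin m ⊕ Fin m)) ^ c i).prod *
        ((List.finRange m).map fun j =>
          ⁅FreeGroup.of (Sum.inr (Sum.inl j) : Fin r ⊕ (Fin m ⊕ Fin m)),
            FreeGroup.of (Sum.inr (Sum.inr j))⁆).prod)
      = ((List.finRange r).map fun i => gx i ^ c i).prod *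
        ((List.finRange m).map fun j => ⁅gy j, gz j⁆).prod := by
  rw [map_mul, map_list_prod, map_list_prod, List.map_map, List.map_map]
  congr 1
  · exact congrArg List.prod (List.map_congr_left fun i _ => by simp [map_zpow])
  · exact congrArg List.prod (List.map_congr_left fun j _ => by simp [map_commutatorElement])

lemma derived_le_ker {d : ℕ} (hd : 1 ≤ d) :
    derivedSeries (FreeGroup α) d ≤ (expMap α).ker := by
  obtain ⟨m, rfl⟩ : ∃ m, d = m + 1 := ⟨d - 1, (Nat.succ_pred_eq_of_pos hd).symm⟩
  rw [derivedSeries_succ]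
  refine le_trans ?_ (Abelianization.commutator_subset_ker (expMap α))
  rw [commutator_def]
  exact Subgroup.commutator_mono le_top le_top

lemma decomposition {r : ℕ} {G : Type*} [Group G] (π : FreeGroup (Fin r) →* G)
    (hπ : Function.Surjective π) (ab : G →* Multiplicative (Fin r →₀ ℤ))
    (hab : ∀ x, ab (π x) = expMap (Fin r) x) (s : G) :
    (((List.finRange r).map fun i => π (FreeGroup.of i) ^ ((ab s).toAdd i)).prod)⁻¹ * s
      ∈ commutator G := by
  obtain ⟨x, rfl⟩ := hπ s
  set E : Fin r →₀ ℤ := (ab (π x)).toAdd with hEdef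
  set px : FreeGroup (Fin r) := ((List.finRange r).map fun i => FreeGroup.of i ^ (E i)).prod
    with hpx
  have h1 : expMap (Fin r) px = ofAdd E := by
    rw [hpx, map_list_prod, List.map_map]
    have h2 : (List.finRange r).map ((expMap (Fin r)) ∘ fun i => FreeGroup.of i ^ (E i))
        = (List.finRange r).map (ofAdd ∘ fun i => Finsupp.single i (E i)) := by
      apply List.map_congr_left
      intro i _
      simp only [Function.comp_apply, map_zpow, expMap_of]
      rw [← ofAdd_zsmul]
      congr 1
      rw [Finsupp.smul_single, smul_eq_mul, mul_one]
    rw [h2, ← List.map_map, ofAdd_list_sum]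
    congr 1
    rw [← Fin.sum_univ_def]
    exact Finsupp.univ_sum_single E
  have h4 : expMap (Fin r) x = ofAdd E := by rw [← hab x, hEdef, ofAdd_toAdd]
  have h3 : expMap (Fin r) (px⁻¹ * x) = 1 := by
    rw [map_mul, map_inv, h1, h4, inv_mul_cancel]
  have h5 := mem_commutator_of_expMap_eq_one h3
  have h6 : π (px⁻¹ * x) ∈ commutator G := by
    have h7 : Subgroup.map π (commutator (FreeGroup (Fin r))) ≤ commutator G := by
      rw [commutator_def, commutator_def, Subgroup.map_commutator]
      exact Subgroup.commutator_mono le_top le_top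
    exact h7 (Subgroup.mem_map_of_mem _ h5)
  have h8 : π px = ((List.finRange r).map fun i => π (FreeGroup.of i) ^ (E i)).prod := by
    rw [hpx, map_list_prod, List.map_map]
    exact congrArg List.prod (List.map_congr_left fun i _ => by simp [map_zpow])
  rw [map_mul, map_inv, h8] at h6
  exact h6

end VCAux

/-- A subgroup `H` of a group `G` is verbally closed. -/
def IsVerballyClosed {G : Type*} [Group G] (H : Subgroup G) : Prop :=
  ∀ (n : ℕ) (w : FreeGroup (Fin n)) (h : G), h ∈ H →
    (∃ g : Fin n → G, FreeGroup.lift g w = h) →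
    ∃ a : Fin n → H, FreeGroup.lift (fun i => (a i : G)) w = h

/-- A subgroup `H` of a group `G` is a retract of `G`. -/
def IsRetract {G : Type*} [Group G] (H : Subgroup G) : Prop :=
  ∃ φ : G →* G, (∀ x ∈ H, φ x = x) ∧ ∀ y, φ y ∈ H

open Multiplicative

theorem cyclic_verbally_closed_iff_retract_free_solvable
    (r d : ℕ) (hr : 1 ≤ r) (hd : 1 ≤ d)
    (h : FreeGroup (Fin r) ⧸ derivedSeries (FreeGroup (Fin r)) d)
    (hne : h ≠ 1) :
    IsVerballyClosed (Subgroup.zpowers h) ↔ IsRetract (Subgroup.zpowers h) := by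
  constructor
  · intro hvc
    set π : FreeGroup (Fin r) →* (FreeGroup (Fin r) ⧸ derivedSeries (FreeGroup (Fin r)) d) :=
      QuotientGroup.mk' (derivedSeries (FreeGroup (Fin r)) d) with hπdef
    have hπsurj : Function.Surjective π := QuotientGroup.mk'_surjective _
    set ab : (FreeGroup (Fin r) ⧸ derivedSeries (FreeGroup (Fin r)) d) →* Multiplicative (Fin r →₀ ℤ) :=
      QuotientGroup.lift _ (VCAux.expMap (Fin r))
        (fun x hx => MonoidHom.mem_ker.mp (VCAux.derived_le_ker hd hx)) with habdef
    have hab : ∀ x, ab (π x) = VCAux.expMap (Fin r) x := fun x => rfl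
    set gx : Fin r → (FreeGroup (Fin r) ⧸ derivedSeries (FreeGroup (Fin r)) d) := fun i => π (FreeGroup.of i) with hgx
    set E : Fin r →₀ ℤ := (ab h).toAdd with hEdef
    set p : (FreeGroup (Fin r) ⧸ derivedSeries (FreeGroup (Fin r)) d) := ((List.finRange r).map fun i => gx i ^ (E i)).prod with hpdef
    have hq : p⁻¹ * h ∈ commutator (FreeGroup (Fin r) ⧸ derivedSeries (FreeGroup (Fin r)) d) := VCAux.decomposition π hπsurj ab hab h
    obtain ⟨L, hL⟩ := VCAux.exists_commutator_list hq
    set m := L.length with hm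
    set gy : Fin m → (FreeGroup (Fin r) ⧸ derivedSeries (FreeGroup (Fin r)) d) := fun j => (L.get j).1 with hgy
    set gz : Fin m → (FreeGroup (Fin r) ⧸ derivedSeries (FreeGroup (Fin r)) d) := fun j => (L.get j).2 with hgz
    set e : (Fin r ⊕ (Fin m ⊕ Fin m)) ≃ Fin (r + (m + m)) :=
      (Equiv.sumCongr (Equiv.refl (Fin r)) finSumFinEquiv).trans finSumFinEquiv with hedef
    set w₀ : FreeGroup (Fin r ⊕ (Fin m ⊕ Fin m)) :=
      ((List.finRange r).map fun i =>
        FreeGroup.of (Sum.inl i : Fin r ⊕ (Fin m ⊕ Fin m)) ^ E i).prod *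
      ((List.finRange m).map fun j =>
        ⁅FreeGroup.of (Sum.inr (Sum.inl j) : Fin r ⊕ (Fin m ⊕ Fin m)),
          FreeGroup.of (Sum.inr (Sum.inr j))⁆).prod with hw₀
    set w : FreeGroup (Fin (r + (m + m))) := FreeGroup.freeGroupCongr e w₀ with hw
    have hLprod : ((List.finRange m).map fun j => ⁅gy j, gz j⁆).prod
        = (L.map fun pq => ⁅pq.1, pq.2⁆).prod := by
      congr 1
      conv_rhs => rw [← List.ofFn_get L, List.map_ofFn]
      rw [← List.ofFn_eq_map]
      rfl
    have hwitness : FreeGroup.lift ((Sum.elim gx (Sum.elim gy gz)) ∘ e.symm) w = h := by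
      rw [hw, VCAux.lift_freeGroupCongr]
      have hfun : (fun a => ((Sum.elim gx (Sum.elim gy gz)) ∘ e.symm) (e a))
          = Sum.elim gx (Sum.elim gy gz) := by
        funext a; simp
      rw [hfun, hw₀, VCAux.lift_word, hLprod, ← hL]
      exact mul_inv_cancel_left p h
    obtain ⟨a, ha⟩ := hvc (r + (m + m)) w h (Subgroup.mem_zpowers h) ⟨_, hwitness⟩
    choose k hk using fun i => Subgroup.mem_zpowers_iff.mp (a i).2
    have ha' : FreeGroup.lift (fun i => h ^ k i) w = h := by
      have hfn : (fun i => h ^ k i) = (fun i => ((a i : FreeGroup (Fin r) ⧸ derivedSeries (FreeGroup (Fin r)) d))) := funext fun i => hk i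
      rw [hfn]; exact ha
    have hfactor : (FreeGroup.lift (fun i => h ^ k i) :
        FreeGroup (Fin (r + (m + m))) →* (FreeGroup (Fin r) ⧸ derivedSeries (FreeGroup (Fin r)) d)) =
        (zpowersHom (FreeGroup (Fin r) ⧸ derivedSeries (FreeGroup (Fin r)) d) h).comp (FreeGroup.lift (fun i => ofAdd (k i))) := by
      apply FreeGroup.ext_hom; intro i
      simp [zpowersHom_apply]
    have hpow : h ^ (FreeGroup.lift (fun i => ofAdd (k i)) w).toAdd = h := by
      rw [← zpowersHom_apply, ← MonoidHom.comp_apply, ← hfactor]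
      exact ha'
    set κ : Fin r → ℤ := fun i => k (e (Sum.inl i)) with hκ
    have hT : (FreeGroup.lift (fun i => ofAdd (k i)) w)
        = ofAdd (((List.finRange r).map fun i => E i * κ i).sum) := by
      rw [hw, VCAux.lift_freeGroupCongr, hw₀]
      have hfun2 : (fun a => ofAdd (k (e a)))
          = Sum.elim (fun i => (ofAdd (κ i) : Multiplicative ℤ))
            (Sum.elim (fun j => ofAdd (k (e (Sum.inr (Sum.inl j)))))
              (fun j => ofAdd (k (e (Sum.inr (Sum.inr j)))))) := by
        funext a
        rcases a with i | j | j <;> rfl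
      rw [hfun2, VCAux.lift_word]
      have hcomm : ((List.finRange m).map fun j =>
          ⁅(ofAdd (k (e (Sum.inr (Sum.inl j)))) : Multiplicative ℤ),
            ofAdd (k (e (Sum.inr (Sum.inr j))))⁆).prod = 1 := by
        apply List.prod_eq_one
        intro y hy
        simp only [List.mem_map] at hy
        obtain ⟨j, _, rfl⟩ := hy
        exact commutatorElement_eq_one_iff_commute.mpr (mul_comm _ _)
      rw [hcomm, mul_one]
      have hfirst : ((List.finRange r).map fun i => (ofAdd (κ i) : Multiplicative ℤ) ^ E i)
          = (List.finRange r).map (ofAdd ∘ fun i => E i * κ i) := by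
        apply List.map_congr_left
        intro i _
        simp only [Function.comp_apply]
        rw [← ofAdd_zsmul, smul_eq_mul]
      rw [hfirst, ← List.map_map, VCAux.ofAdd_list_sum]
    rw [hT, toAdd_ofAdd] at hpow
    set T : ℤ := ((List.finRange r).map fun i => E i * κ i).sum with hTdef
    have hT1 : T = 1 := by
      by_contra hT1
      have hzero : h ^ (T - 1) = 1 := by
        rw [zpow_sub, zpow_one, hpow, mul_inv_cancel]
      exact hne (VCAux.quot_torsionfree d h (sub_ne_zero.mpr hT1) hzero)
    set lf : (Fin r →₀ ℤ) →+ ℤ :=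
      { toFun := fun f => ∑ i : Fin r, f i * κ i
        map_zero' := by simp
        map_add' := by intro f g; simp [add_mul, Finset.sum_add_distrib] } with hlf
    refine ⟨(zpowersHom (FreeGroup (Fin r) ⧸ derivedSeries (FreeGroup (Fin r)) d) h).comp ((AddMonoidHom.toMultiplicative lf).comp ab), ?_, ?_⟩
    · intro x hx
      obtain ⟨t, rfl⟩ := Subgroup.mem_zpowers_iff.mp hx
      have hφh : ((zpowersHom (FreeGroup (Fin r) ⧸ derivedSeries (FreeGroup (Fin r)) d) h).comp
          ((AddMonoidHom.toMultiplicative lf).comp ab)) h = h := by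
        show (zpowersHom (FreeGroup (Fin r) ⧸ derivedSeries (FreeGroup (Fin r)) d) h)
          ((AddMonoidHom.toMultiplicative lf) (ab h)) = h
        rw [zpowersHom_apply]
        have htoAdd : ((AddMonoidHom.toMultiplicative lf) (ab h)).toAdd = lf E := rfl
        rw [htoAdd]
        have hlfE : lf E = T := by
          show (∑ i : Fin r, E i * κ i) = T
          rw [hTdef, Fin.sum_univ_def]
        rw [hlfE, hT1, zpow_one]
      rw [map_zpow, hφh]
    · intro y
      exact Subgroup.mem_zpowers_iff.mpr
        ⟨((AddMonoidHom.toMultiplicative lf) (ab y)).toAdd, rfl⟩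
  · rintro ⟨φ, hfix, hmem⟩ n w x hx ⟨g, hg⟩
    refine ⟨fun i => ⟨φ (g i), hmem (g i)⟩, ?_⟩
    have hcomp : (FreeGroup.lift (fun i => φ (g i)) :
        FreeGroup (Fin n) →* FreeGroup (Fin r) ⧸ derivedSeries (FreeGroup (Fin r)) d)
        = φ.comp (FreeGroup.lift g) := by
      apply FreeGroup.ext_hom; intro i; simp
    show FreeGroup.lift (fun i => φ (g i)) w = x
    rw [hcomp, MonoidHom.comp_apply, hg, hfix x hx]
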